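/- With the implication defined via atoms and double pseudo-negation on 𝒫(R(H)), for all S₁, S₂, S₃ ⊆ R(H): (S₁ → S₂) ∩ (S₂ → S₃) ⊆ S₁ → S₃ (transitivity axiom of a weakly Heyting algebra). -/

import Mathlib

variable {H : Type*} [NormedAddCommGroup H] [InnerProductSpace ℂ H]

/-- The ray space: the set of one-dimensional subspaces (rays) of `H`. -/
def RaySp (H : Type*) [NormedAddCommGroup H] [InnerProductSpace ℂ H] :
    Set (Submodule ℂ H) :=
  {r | ∃ ψ : H, ψ ≠ 0 ∧ r = (ℂ ∙ ψ)}

/-- The set of rays contained in a subspace `K`. -/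
def rset (K : Submodule ℂ H) : Set (Submodule ℂ H) :=
  {r | ∃ ψ : H, ψ ≠ 0 ∧ ψ ∈ K ∧ r = (ℂ ∙ ψ)}

/-- The orthogonal pseudo-negation on sets of rays. -/
def pneg (S : Set (Submodule ℂ H)) : Set (Submodule ℂ H) :=
  {r | ∃ ψ : H, ψ ≠ 0 ∧ r = (ℂ ∙ ψ) ∧
    ∀ φ : H, φ ≠ 0 → (ℂ ∙ φ) ∈ S → (inner ℂ ψ φ : ℂ) = 0}

/-- `fset S` = the set of closed subspaces all of whose rays lie in `S`. -/
def fset (S : Set (Submodule ℂ H)) : Set (Submodule ℂ H) :=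
  {K | IsClosed (K : Set H) ∧ ∀ ψ : H, ψ ∈ K → ψ ≠ 0 → (ℂ ∙ ψ) ∈ S}

/-- `gset I` = the set of rays contained in some member of `I`. -/
def gset (I : Set (Submodule ℂ H)) : Set (Submodule ℂ H) :=
  {r | ∃ K ∈ I, ∃ ψ : H, ψ ≠ 0 ∧ ψ ∈ K ∧ r = (ℂ ∙ ψ)}

/-- A distributive ideal of the lattice of closed subspaces of `H`: a nonempty,
downward-closed set of closed subspaces, closed under joins that distribute over
all meets (joins of closed subspaces being closures of algebraic suprema). -/
def IsDistIdeal (I : Set (Submodule ℂ H)) : Prop :=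
  (∀ K ∈ I, IsClosed (K : Set H)) ∧ I.Nonempty ∧
  (∀ K ∈ I, ∀ K' : Submodule ℂ H, IsClosed (K' : Set H) → K' ≤ K → K' ∈ I) ∧
  (∀ 𝒦 ⊆ I, (∀ K' : Submodule ℂ H, IsClosed (K' : Set H) →
      (sSup 𝒦).topologicalClosure ⊓ K' = (⨆ K ∈ 𝒦, K ⊓ K').topologicalClosure) →
    (sSup 𝒦).topologicalClosure ∈ I)

lemma pneg_subset_RaySp (S : Set (Submodule ℂ H)) : pneg S ⊆ RaySp H := by
  rintro x ⟨ψ, hψ, rfl, -⟩; exact ⟨ψ, hψ, rfl⟩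

lemma mem_pneg_iff {S : Set (Submodule ℂ H)} {ψ : H} (hψ : ψ ≠ 0) :
    (ℂ ∙ ψ) ∈ pneg S ↔ ∀ φ : H, φ ≠ 0 → (ℂ ∙ φ) ∈ S → (inner ℂ ψ φ : ℂ) = 0 := by
  constructor
  · rintro ⟨ψ', hψ', hspan, h⟩ φ hφ hφS
    have hmem : ψ ∈ (ℂ ∙ ψ') := hspan ▸ Submodule.mem_span_singleton_self ψ
    obtain ⟨c, rfl⟩ := Submodule.mem_span_singleton.mp hmem
    rw [inner_smul_left, h φ hφ hφS, mul_zero]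
  · intro h; exact ⟨ψ, hψ, rfl, h⟩

lemma span_mem_pneg_singleton {χ φ : H} (hχ : χ ≠ 0) (hφ : φ ≠ 0) :
    (ℂ ∙ φ) ∈ pneg {(ℂ ∙ χ : Submodule ℂ H)} ↔ (inner ℂ φ χ : ℂ) = 0 := by
  constructor
  · intro h; exact (mem_pneg_iff hφ).mp h χ hχ rfl
  · intro h
    rw [mem_pneg_iff hφ]
    intro φ' hφ' hmem
    have : φ' ∈ (ℂ ∙ χ) := (Set.mem_singleton_iff.mp hmem) ▸ Submodule.mem_span_singleton_self φ'
    obtain ⟨c, rfl⟩ := Submodule.mem_span_singleton.mp this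
    rw [inner_smul_right, h, mul_zero]

lemma orth_char [CompleteSpace H] {ψ χ : H} (hχ : χ ≠ 0) :
    (∀ φ : H, φ ≠ 0 → (ℂ ∙ φ) ∈ pneg {(ℂ ∙ χ : Submodule ℂ H)} → (inner ℂ ψ φ : ℂ) = 0)
      ↔ ψ ∈ (ℂ ∙ χ) := by
  constructor
  · intro h
    have : ψ ∈ ((ℂ ∙ χ)ᗮ)ᗮ := by
      rw [Submodule.mem_orthogonal]
      intro u hu
      by_cases hu0 : u = 0
      · simp [hu0]
      · have huχ : (inner ℂ u χ : ℂ) = 0 := by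
          have h1 := (Submodule.mem_orthogonal _ u).mp hu χ (Submodule.mem_span_singleton_self χ)
          exact inner_eq_zero_symm.mp h1
        have := h u hu0 ((span_mem_pneg_singleton hχ hu0).mpr huχ)
        exact inner_eq_zero_symm.mpr this
    rwa [Submodule.orthogonal_orthogonal] at this
  · intro hmem φ hφ hpneg
    obtain ⟨c, rfl⟩ := Submodule.mem_span_singleton.mp hmem
    have hφχ : (inner ℂ φ χ : ℂ) = 0 := (span_mem_pneg_singleton hχ hφ).mp hpneg
    rw [inner_smul_left, inner_eq_zero_symm.mp hφχ, mul_zero]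

lemma triple_pneg [CompleteSpace H] {χ : H} (hχ : χ ≠ 0) :
    pneg (pneg (pneg {(ℂ ∙ χ : Submodule ℂ H)})) = pneg {(ℂ ∙ χ : Submodule ℂ H)} := by
  ext x
  constructor
  · rintro ⟨ψ, hψ, rfl, h⟩
    rw [span_mem_pneg_singleton hχ hψ]
    apply h χ hχ
    rw [mem_pneg_iff hχ, orth_char hχ]
    exact Submodule.mem_span_singleton_self χ
  · rintro ⟨ψ, hψ, rfl, h⟩
    refine ⟨ψ, hψ, rfl, fun φ hφ hmem => ?_⟩
    have : φ ∈ (ℂ ∙ χ) := (orth_char hχ).mp ((mem_pneg_iff hφ).mp hmem)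
    obtain ⟨c, rfl⟩ := Submodule.mem_span_singleton.mp this
    rw [inner_smul_right, h χ hχ rfl, mul_zero]

lemma pneg_union_self_empty [CompleteSpace H] {χ : H} (hχ : χ ≠ 0) :
    pneg (pneg {(ℂ ∙ χ : Submodule ℂ H)} ∪ {(ℂ ∙ χ : Submodule ℂ H)}) = ∅ := by
  ext x
  simp only [Set.mem_empty_iff_false, iff_false]
  rintro ⟨ψ, hψ, rfl, h⟩
  have hψχ : (inner ℂ ψ χ : ℂ) = 0 := h χ hχ (Or.inr rfl)
  have hψmem : ψ ∈ (ℂ ∙ χ) := by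
    rw [← orth_char hχ]
    intro φ hφ hφp
    exact h φ hφ (Or.inl hφp)
  obtain ⟨c, rfl⟩ := Submodule.mem_span_singleton.mp hψmem
  apply hψ
  have : (inner ℂ (c • χ) (c • χ) : ℂ) = 0 := by rw [inner_smul_right, hψχ, mul_zero]
  exact inner_self_eq_zero.mp this

lemma pneg_empty : pneg (∅ : Set (Submodule ℂ H)) = RaySp H := by
  ext x
  constructor
  · exact fun h => pneg_subset_RaySp _ h
  · rintro ⟨ψ, hψ, rfl⟩; exact ⟨ψ, hψ, rfl, fun φ hφ h => h.elim⟩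

open Classical in
/-- The weakly-Heyting implication on sets of rays, defined via atoms (singleton
ray sets) and double pseudo-negation. -/
noncomputable def himp' (S₁ S₂ : Set (Submodule ℂ H)) : Set (Submodule ℂ H) :=
  if S₁ = ∅ then RaySp H
  else ⋂ r ∈ S₁, pneg (pneg (pneg {r} ∪ ({r} ∩ S₂)))

/-- Transitivity axiom of a weakly Heyting algebra:
`(S₁ → S₂) ∩ (S₂ → S₃) ⊆ S₁ → S₃`. -/
theorem himp_trans [CompleteSpace H]
    (S₁ S₂ S₃ : Set (Submodule ℂ H))
    (h₁ : S₁ ⊆ RaySp H) (h₂ : S₂ ⊆ RaySp H) (h₃ : S₃ ⊆ RaySp H) :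
    himp' S₁ S₂ ∩ himp' S₂ S₃ ⊆ himp' S₁ S₃ := by
  rintro x ⟨hx12, hx23⟩
  by_cases hS1 : S₁ = ∅
  · rw [himp', if_pos hS1] at hx12 ⊢
    exact hx12
  · rw [himp', if_neg hS1] at hx12 ⊢
    rw [Set.mem_iInter₂] at hx12 ⊢
    intro r hr
    obtain ⟨χ, hχ, rfl⟩ := h₁ hr
    by_cases hr3 : (ℂ ∙ χ) ∈ S₃
    · have heq : ({(ℂ ∙ χ : Submodule ℂ H)} : Set _) ∩ S₃ = {(ℂ ∙ χ : Submodule ℂ H)} :=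
        Set.inter_eq_left.mpr (Set.singleton_subset_iff.mpr hr3)
      rw [heq, pneg_union_self_empty hχ, pneg_empty]
      exact pneg_subset_RaySp _ (hx12 _ hr)
    · have h3 : ({(ℂ ∙ χ : Submodule ℂ H)} : Set _) ∩ S₃ = ∅ :=
        Set.singleton_inter_eq_empty.mpr hr3
      rw [h3, Set.union_empty, triple_pneg hχ]
      by_cases hr2 : (ℂ ∙ χ) ∈ S₂
      · have hS2 : S₂ ≠ ∅ := Set.nonempty_iff_ne_empty.mp ⟨_, hr2⟩
        rw [himp', if_neg hS2, Set.mem_iInter₂] at hx23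
        have h := hx23 _ hr2
        rwa [h3, Set.union_empty, triple_pneg hχ] at h
      · have h := hx12 _ hr
        have h2 : ({(ℂ ∙ χ : Submodule ℂ H)} : Set _) ∩ S₂ = ∅ :=
          Set.singleton_inter_eq_empty.mpr hr2
        rwa [h2, Set.union_empty, triple_pneg hχ] at h
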